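/- Rigidity for the Gauss–Bonnet Penrose inequality (equality case of Theorem 1.2, radial form). Let n ≥ 3, λ ≥ 0, α > 0, α̃ = (n−2)(n−3)·α, r₊ > 0, and let V, k_I, k_S be spherically symmetric radial data on [r₊,∞) satisfying the radial Gauss–Bonnet constraints with matter energy density μ̃ and radial momentum density J̃_ν. Assume the dominant energy condition μ̃(r) ≥ |J̃_ν(r)| and the outermost condition H(r) > |k_S(r)| for all r > r₊. If the generalized Gauss–Bonnet Hawking mass m_GB is constant on [r₊,∞), then μ̃(r) = 0 and J̃_ν(r) = 0 for all r > r₊. -/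

import Mathlib

open Real Filter

/-- Mean curvature of the coordinate sphere of radius `r`: `H = (n-1)√(V r)/r`. -/
noncomputable def sphMeanCurv (n : ℕ) (V : ℝ → ℝ) (r : ℝ) : ℝ :=
  ((n : ℝ) - 1) * Real.sqrt (V r) / r

/-- Scalar curvature of `g = V⁻¹dr² + r²·(round metric)`:
`R = (n-1) r^{1-n} (d/dr)[r^{n-2}(1 - V)]`. -/
noncomputable def sphScalCurv (n : ℕ) (V : ℝ → ℝ) (r : ℝ) : ℝ :=
  ((n : ℝ) - 1) / r ^ (n - 1) * deriv (fun ρ => ρ ^ (n - 2) * (1 - V ρ)) r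

/-- The Hawking mass `m_H(r) = (r^{n-2}/2)[1 - V + r² k_S²/(n-1)²]`. -/
noncomputable def hawkingMass (n : ℕ) (V kS : ℝ → ℝ) (r : ℝ) : ℝ :=
  r ^ (n - 2) / 2 * (1 - V r + r ^ 2 * kS r ^ 2 / ((n : ℝ) - 1) ^ 2)

/-- The generalized Gauss–Bonnet Hawking mass
`m_GB(r) = m_H(r) + λ r^n/2 + 2 α̃ m_H(r)²/r^n`. -/
noncomputable def gbHawkingMass (n : ℕ) (lam ta : ℝ) (V kS : ℝ → ℝ) (r : ℝ) : ℝ :=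
  hawkingMass n V kS r + lam * r ^ n / 2 + 2 * ta * (hawkingMass n V kS r) ^ 2 / r ^ n

/-- `N₁ = H·[k_I - k_S/(n-1) - r k_S'/(n-1)]`. -/
noncomputable def gbN1 (n : ℕ) (V kI kS : ℝ → ℝ) (r : ℝ) : ℝ :=
  sphMeanCurv n V r *
    (kI r - kS r / ((n : ℝ) - 1) - r * deriv kS r / ((n : ℝ) - 1))

/-- `𝓜 = R + (k_I + k_S)² - k_I² - k_S²/(n-1)`. -/
noncomputable def gbM (n : ℕ) (V kI kS : ℝ → ℝ) (r : ℝ) : ℝ :=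
  sphScalCurv n V r + (kI r + kS r) ^ 2 - kI r ^ 2 - kS r ^ 2 / ((n : ℝ) - 1)

/-- `μ̃⁽ᵅ⁾ = (n-1)(n-2)(n-3)·(8 m_H/r^n)·[m_H'/r^{n-1} - n m_H/(2 r^n) + (k_S/(n-1)) N₁/H]`. -/
noncomputable def gbMuAlpha (n : ℕ) (V kI kS : ℝ → ℝ) (r : ℝ) : ℝ :=
  ((n : ℝ) - 1) * ((n : ℝ) - 2) * ((n : ℝ) - 3) * (8 * hawkingMass n V kS r / r ^ n) *
    (deriv (hawkingMass n V kS) r / r ^ (n - 1)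
      - (n : ℝ) * hawkingMass n V kS r / (2 * r ^ n)
      + kS r / ((n : ℝ) - 1) * gbN1 n V kI kS r / sphMeanCurv n V r)

/-- `J̃⁽ᵅ⁾_ν = 2 N₁ (n-2)(n-3) m_H/r^n`. -/
noncomputable def gbJAlpha (n : ℕ) (V kI kS : ℝ → ℝ) (r : ℝ) : ℝ :=
  2 * gbN1 n V kI kS r * ((n : ℝ) - 2) * ((n : ℝ) - 3) * hawkingMass n V kS r / r ^ n


private lemma gb_identity (N a lam r q s u m RR i H M : ℝ) (hr : r ≠ 0) (hq : q ≠ 0)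
    (hH : H ≠ 0) (hN : N - 1 ≠ 0)
    (hM : M = q * r ^ 2 / (2 * (N - 1)) * (RR + (i + s) ^ 2 - i ^ 2 - s ^ 2 / (N - 1) - 2 * s * u)) :
    RR + (i + s) ^ 2 - i ^ 2 - s ^ 2 / (N - 1) + N * (N - 1) * lam
      + a * ((N - 1) * (N - 2) * (N - 3) * (8 * m / (q * r ^ 3))
          * (M / (q * r ^ 2) - N * m / (2 * (q * r ^ 3)) + s / (N - 1) * (H * u) / H))
    = 2 * (s / H) * (H * u + 2 * a * (2 * (H * u) * (N - 2) * (N - 3) * m / (q * r ^ 3)))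
      + 2 * (N - 1) / (q * r ^ 2)
        * (M + lam * (N * (q * r ^ 2)) / 2
          + (2 * ((N - 2) * (N - 3) * a) * (2 * m * M) * (q * r ^ 3)
            - 2 * ((N - 2) * (N - 3) * a) * m ^ 2 * (N * (q * r ^ 2))) / (q * r ^ 3) ^ 2) := by
  subst hM
  field_simp
  ring

/-- Rigidity for the Gauss–Bonnet Penrose inequality (equality case of Theorem 1.2, radial
form): if the generalized Gauss–Bonnet Hawking mass is constant on `[r₊, ∞)`, then the
matter energy and momentum densities vanish: `μ̃ = 0` and `J̃_ν = 0` on `(r₊, ∞)`. -/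
theorem gb_penrose_rigidity (n : ℕ) (hn : 3 ≤ n) (lam α ta rp : ℝ) (hlam : 0 ≤ lam)
    (hα : 0 < α) (hta : ta = ((n : ℝ) - 2) * ((n : ℝ) - 3) * α) (hrp : 0 < rp)
    (V kI kS μ J : ℝ → ℝ)
    (hVpos : ∀ r, rp < r → 0 < V r)
    (hVd : ∀ r, rp < r → DifferentiableAt ℝ V r)
    (hkSd : ∀ r, rp < r → DifferentiableAt ℝ kS r)
    (hmHd : ∀ r, rp < r → DifferentiableAt ℝ (hawkingMass n V kS) r)
    -- Gauss–Bonnet Hamiltonian constraint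
    (hmu : ∀ r, rp < r → 16 * π * μ r =
      gbM n V kI kS r + (n : ℝ) * ((n : ℝ) - 1) * lam + α * gbMuAlpha n V kI kS r)
    -- Gauss–Bonnet momentum constraint
    (hJ : ∀ r, rp < r → 8 * π * J r = gbN1 n V kI kS r + 2 * α * gbJAlpha n V kI kS r)
    -- dominant energy condition
    (hDEC : ∀ r, rp < r → |J r| ≤ μ r)
    -- outermost condition
    (hout : ∀ r, rp < r → |kS r| < sphMeanCurv n V r)
    -- equality case: `m_GB` is constant on `[r₊, ∞)`
    (hconst : ∀ r₁ r₂, rp ≤ r₁ → rp ≤ r₂ →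
      gbHawkingMass n lam ta V kS r₁ = gbHawkingMass n lam ta V kS r₂) :
    ∀ r, rp < r → μ r = 0 ∧ J r = 0 := by
  intro r hr
  have hr0 : (0:ℝ) < r := hrp.trans hr
  have hrne : r ≠ 0 := ne_of_gt hr0
  have hv : 0 < V r := hVpos r hr
  have hN3 : (3:ℝ) ≤ (n:ℝ) := by exact_mod_cast hn
  have hN1 : (n:ℝ) - 1 ≠ 0 := by linarith
  have hVder : HasDerivAt V (deriv V r) r := (hVd r hr).hasDerivAt
  have hkSder : HasDerivAt kS (deriv kS r) r := (hkSd r hr).hasDerivAt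
  set h := Real.sqrt (V r) with hhdef
  have hh0 : 0 < h := Real.sqrt_pos.mpr hv
  have hv2 : V r = h ^ 2 := (Real.sq_sqrt hv.le).symm
  set q := r ^ (n - 3) with hqdef
  have hq0 : q ≠ 0 := pow_ne_zero _ hrne
  have pw3 : r ^ (n - 2 - 1) = q := by rw [hqdef, show n - 2 - 1 = n - 3 from by omega]
  have pw2 : r ^ (n - 2) = q * r := by
    rw [hqdef, ← pow_succ, show n - 3 + 1 = n - 2 from by omega]
  have pw1 : r ^ (n - 1) = q * r ^ 2 := by
    rw [hqdef, ← pow_add, show n - 3 + 2 = n - 1 from by omega]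
  have pw0 : r ^ n = q * r ^ 3 := by
    rw [hqdef, ← pow_add, show n - 3 + 3 = n from by omega]
  have hNcast2 : ((n - 2 : ℕ) : ℝ) = (n:ℝ) - 2 := by
    rw [Nat.cast_sub (by omega : 2 ≤ n)]; norm_num
  have hHpos : 0 < sphMeanCurv n V r := by
    rw [sphMeanCurv, ← hhdef]
    exact div_pos (mul_pos (by linarith) hh0) hr0
  have hHne : ((n:ℝ) - 1) * h / r ≠ 0 := by
    have := hHpos
    rw [sphMeanCurv, ← hhdef] at this
    exact ne_of_gt this
  -- the explicit Hawking mass and its derivative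
  have hA : HasDerivAt (fun ρ => ρ ^ (n - 2) * (1 - V ρ))
      (((n:ℝ) - 2) * q * (1 - h ^ 2) - q * r * deriv V r) r := by
    have base := (hasDerivAt_pow (n - 2) r).mul ((hasDerivAt_const r (1:ℝ)).sub hVder)
    convert base using 1
    · rfl
    · rfl
    · rfl
    simp only [Pi.sub_apply, Pi.add_apply, Pi.pow_apply, Pi.mul_apply]
    rw [hNcast2, pw3, pw2, hv2]
    try ring
  have hB : HasDerivAt (hawkingMass n V kS)
      (((n:ℝ) - 2) * q / 2 * (1 - h ^ 2 + r ^ 2 * kS r ^ 2 / ((n:ℝ) - 1) ^ 2)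
        + q * r / 2 * (-(deriv V r)
            + (2 * r * kS r ^ 2 + r ^ 2 * (2 * kS r * deriv kS r)) / ((n:ℝ) - 1) ^ 2)) r := by
    have base := ((hasDerivAt_pow (n - 2) r).div_const 2).mul
      (((hasDerivAt_const r (1:ℝ)).sub hVder).add
        (((hasDerivAt_pow 2 r).mul (hkSder.pow 2)).div_const (((n:ℝ) - 1) ^ 2)))
    have hB' : HasDerivAt
        (fun ρ : ℝ => ρ ^ (n - 2) / 2 * (1 - V ρ + ρ ^ 2 * kS ρ ^ 2 / ((n:ℝ) - 1) ^ 2))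
        (((n:ℝ) - 2) * q / 2 * (1 - h ^ 2 + r ^ 2 * kS r ^ 2 / ((n:ℝ) - 1) ^ 2)
          + q * r / 2 * (-(deriv V r)
              + (2 * r * kS r ^ 2 + r ^ 2 * (2 * kS r * deriv kS r)) / ((n:ℝ) - 1) ^ 2)) r := by
      convert base using 1
      · rfl
      · rfl
      · rfl
      simp only [Pi.sub_apply, Pi.add_apply, Pi.pow_apply, Pi.mul_apply]
      rw [hNcast2, pw3, pw2, hv2]
      try norm_num
      try ring
    exact hB'
  -- the derivative of the generalized Gauss-Bonnet Hawking mass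
  set Mx : ℝ := ((n:ℝ) - 2) * q / 2 * (1 - h ^ 2 + r ^ 2 * kS r ^ 2 / ((n:ℝ) - 1) ^ 2)
      + q * r / 2 * (-(deriv V r)
          + (2 * r * kS r ^ 2 + r ^ 2 * (2 * kS r * deriv kS r)) / ((n:ℝ) - 1) ^ 2) with hMxdef
  set mx : ℝ := q * r / 2 * (1 - h ^ 2 + r ^ 2 * kS r ^ 2 / ((n:ℝ) - 1) ^ 2) with hmxdef
  have hmx : hawkingMass n V kS r = mx := by
    rw [hawkingMass, pw2, hv2, hmxdef]
  have hD : HasDerivAt (gbHawkingMass n lam ta V kS)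
      (Mx + lam * ((n:ℝ) * (q * r ^ 2)) / 2
        + (2 * (((n:ℝ) - 2) * ((n:ℝ) - 3) * α) * (2 * mx * Mx) * (q * r ^ 3)
          - 2 * (((n:ℝ) - 2) * ((n:ℝ) - 3) * α) * mx ^ 2 * ((n:ℝ) * (q * r ^ 2))) / (q * r ^ 3) ^ 2) r := by
    have base := (hB.add (((hasDerivAt_pow n r).const_mul lam).div_const 2)).add
      (((hB.pow 2).const_mul (2 * ta)).div (hasDerivAt_pow n r) (pow_ne_zero n hrne))
    have hD' : HasDerivAt
        (fun ρ : ℝ => hawkingMass n V kS ρ + lam * ρ ^ n / 2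
          + 2 * ta * hawkingMass n V kS ρ ^ 2 / ρ ^ n)
        (Mx + lam * ((n:ℝ) * (q * r ^ 2)) / 2
          + (2 * (((n:ℝ) - 2) * ((n:ℝ) - 3) * α) * (2 * mx * Mx) * (q * r ^ 3)
            - 2 * (((n:ℝ) - 2) * ((n:ℝ) - 3) * α) * mx ^ 2 * ((n:ℝ) * (q * r ^ 2))) / (q * r ^ 3) ^ 2) r := by
      convert base using 1
      · rfl
      · rfl
      · rfl
      simp only [Pi.sub_apply, Pi.add_apply, Pi.pow_apply, Pi.mul_apply]
      rw [hmx, pw1, pw0, hta]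
      try norm_num
      try ring
    exact hD'
  have h0 : HasDerivAt (gbHawkingMass n lam ta V kS) 0 r := by
    have hev : gbHawkingMass n lam ta V kS =ᶠ[nhds r]
        fun _ => gbHawkingMass n lam ta V kS rp := by
      filter_upwards [Ioi_mem_nhds hr] with x hx
      exact hconst x rp (le_of_lt hx) le_rfl
    exact (hasDerivAt_const r _).congr_of_eventuallyEq hev
  have hD0 : Mx + lam * ((n:ℝ) * (q * r ^ 2)) / 2
      + (2 * (((n:ℝ) - 2) * ((n:ℝ) - 3) * α) * (2 * mx * Mx) * (q * r ^ 3)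
        - 2 * (((n:ℝ) - 2) * ((n:ℝ) - 3) * α) * mx ^ 2 * ((n:ℝ) * (q * r ^ 2))) / (q * r ^ 3) ^ 2
      = 0 := hD.unique h0
  -- the key relation between the densities
  have hMrel : Mx = q * r ^ 2 / (2 * ((n:ℝ) - 1))
      * (((n:ℝ) - 1) / (q * r ^ 2) * (((n:ℝ) - 2) * q * (1 - h ^ 2) - q * r * deriv V r)
        + (kI r + kS r) ^ 2 - kI r ^ 2 - kS r ^ 2 / ((n:ℝ) - 1)
        - 2 * kS r * (kI r - kS r / ((n:ℝ) - 1) - r * deriv kS r / ((n:ℝ) - 1))) := by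
    rw [hMxdef]
    field_simp
    ring
  have big := gb_identity (n:ℝ) α lam r q (kS r)
    (kI r - kS r / ((n:ℝ) - 1) - r * deriv kS r / ((n:ℝ) - 1)) mx
    (((n:ℝ) - 1) / (q * r ^ 2) * (((n:ℝ) - 2) * q * (1 - h ^ 2) - q * r * deriv V r))
    (kI r) (((n:ℝ) - 1) * h / r) Mx hrne hq0 hHne hN1 hMrel
  rw [hD0, mul_zero, add_zero] at big
  have e3 : 16 * π * μ r = 2 * (kS r / sphMeanCurv n V r) * (8 * π * J r) := by
    rw [hmu r hr, hJ r hr]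
    simp only [gbM, sphScalCurv, gbMuAlpha, gbN1, gbJAlpha, sphMeanCurv]
    rw [hA.deriv, hB.deriv]
    simp only [hawkingMass]
    rw [← hhdef, hv2, pw0, pw1, pw2, ← hmxdef]
    linear_combination big
  have key : μ r = kS r / sphMeanCurv n V r * J r := by
    have h16 : (16 * π : ℝ) ≠ 0 := by positivity
    apply mul_left_cancel₀ h16
    linear_combination e3
  have hcabs : |kS r / sphMeanCurv n V r| < 1 := by
    rw [abs_div, abs_of_pos hHpos]
    exact (div_lt_one hHpos).mpr (hout r hr)
  have hJ0 : J r = 0 := by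
    by_contra hne
    have h1 : 0 < |J r| := abs_pos.mpr hne
    have h2 : μ r ≤ |kS r / sphMeanCurv n V r| * |J r| := by
      rw [key, ← abs_mul]
      exact le_abs_self _
    have h3 : |kS r / sphMeanCurv n V r| * |J r| < 1 * |J r| :=
      mul_lt_mul_of_pos_right hcabs h1
    have h4 := hDEC r hr
    linarith
  refine ⟨?_, hJ0⟩
  rw [key, hJ0, mul_zero]
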